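/- Let p ∈ [1, ∞) be real, let (C_n) be a sequence of bivariate copulas converging uniformly on [0,1]² to a bivariate copula C, and suppose C is not symmetric (C(u₀,v₀) ≠ C(v₀,u₀) for some (u₀,v₀) ∈ [0,1]²). Then ∫_{[0,1]²} |C_n(u,v) − C_n(v,u)|^p du dv → ∫_{[0,1]²} |C(u,v) − C(v,u)|^p du dv as n → ∞, and the limit is strictly positive; consequently, for any real sequence (c_n) with c_n/n → 0, the statistic T_n := n · ∫_{[0,1]²} |C_n(u,v) − C_n(v,u)|^p du dv satisfies T_n > c_n for all sufficiently large n. -/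

import Mathlib

open MeasureTheory Set Filter

noncomputable section

/-- A bivariate copula: boundary conditions on `[0,1]` and the 2-increasing property. -/
def IsCopula (C : ℝ → ℝ → ℝ) : Prop :=
  (∀ u ∈ Set.Icc (0:ℝ) 1, C u 0 = 0) ∧
  (∀ v ∈ Set.Icc (0:ℝ) 1, C 0 v = 0) ∧
  (∀ u ∈ Set.Icc (0:ℝ) 1, C u 1 = u) ∧
  (∀ v ∈ Set.Icc (0:ℝ) 1, C 1 v = v) ∧
  (∀ u₁ u₂ v₁ v₂ : ℝ, 0 ≤ u₁ → u₁ ≤ u₂ → u₂ ≤ 1 → 0 ≤ v₁ → v₁ ≤ v₂ → v₂ ≤ 1 →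
    0 ≤ C u₂ v₂ - C u₁ v₂ - C u₂ v₁ + C u₁ v₁)

/-- The unit square `[0,1]²` in `ℝ × ℝ`. -/
def unitSq : Set (ℝ × ℝ) := Set.Icc (0:ℝ) 1 ×ˢ Set.Icc (0:ℝ) 1

lemma cop_nonneg {C : ℝ → ℝ → ℝ} (hC : IsCopula C) {u v : ℝ}
    (hu : u ∈ Set.Icc (0:ℝ) 1) (hv : v ∈ Set.Icc (0:ℝ) 1) : 0 ≤ C u v := by
  obtain ⟨hB0, hB0', hB1, hB1', h2⟩ := hC
  have h := h2 0 u 0 v le_rfl hu.1 hu.2 le_rfl hv.1 hv.2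
  have e1 := hB0' v hv
  have e2 := hB0 u hu
  have e3 := hB0 0 ⟨le_rfl, zero_le_one⟩
  linarith

lemma cop_le_one {C : ℝ → ℝ → ℝ} (hC : IsCopula C) {u v : ℝ}
    (hu : u ∈ Set.Icc (0:ℝ) 1) (hv : v ∈ Set.Icc (0:ℝ) 1) : C u v ≤ 1 := by
  obtain ⟨hB0, hB0', hB1, hB1', h2⟩ := hC
  have h := h2 0 u v 1 le_rfl hu.1 hu.2 hv.1 hv.2 le_rfl
  have e1 := hB1 u hu
  have e2 := hB0' 1 ⟨zero_le_one, le_rfl⟩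
  have e3 := hB0' v hv
  linarith [hu.2]

lemma cop_lip1 {C : ℝ → ℝ → ℝ} (hC : IsCopula C) {u u' v : ℝ}
    (hu : u ∈ Set.Icc (0:ℝ) 1) (hu' : u' ∈ Set.Icc (0:ℝ) 1) (hv : v ∈ Set.Icc (0:ℝ) 1) :
    |C u v - C u' v| ≤ |u - u'| := by
  obtain ⟨hB0, hB0', hB1, hB1', h2⟩ := hC
  have key : ∀ a b : ℝ, a ∈ Set.Icc (0:ℝ) 1 → b ∈ Set.Icc (0:ℝ) 1 → a ≤ b →
      |C b v - C a v| ≤ |b - a| := by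
    intro a b ha hb hab
    have h1 := h2 a b 0 v ha.1 hab hb.2 le_rfl hv.1 hv.2
    have h3 := h2 a b v 1 ha.1 hab hb.2 hv.1 hv.2 le_rfl
    have e1 := hB0 a ha
    have e2 := hB0 b hb
    have e3 := hB1 a ha
    have e4 := hB1 b hb
    rw [abs_of_nonneg (by linarith), abs_of_nonneg (by linarith)]
    linarith
  rcases le_total u' u with h | h
  · exact key u' u hu' hu h
  · rw [abs_sub_comm, abs_sub_comm u u']
    exact key u u' hu hu' h

lemma cop_lip2 {C : ℝ → ℝ → ℝ} (hC : IsCopula C) {u v v' : ℝ}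
    (hu : u ∈ Set.Icc (0:ℝ) 1) (hv : v ∈ Set.Icc (0:ℝ) 1) (hv' : v' ∈ Set.Icc (0:ℝ) 1) :
    |C u v - C u v'| ≤ |v - v'| := by
  obtain ⟨hB0, hB0', hB1, hB1', h2⟩ := hC
  have key : ∀ a b : ℝ, a ∈ Set.Icc (0:ℝ) 1 → b ∈ Set.Icc (0:ℝ) 1 → a ≤ b →
      |C u b - C u a| ≤ |b - a| := by
    intro a b ha hb hab
    have h1 := h2 0 u a b le_rfl hu.1 hu.2 ha.1 hab hb.2
    have h3 := h2 u 1 a b hu.1 hu.2 le_rfl ha.1 hab hb.2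
    have e1 := hB0' a ha
    have e2 := hB0' b hb
    have e3 := hB1' a ha
    have e4 := hB1' b hb
    rw [abs_of_nonneg (by linarith), abs_of_nonneg (by linarith)]
    linarith
  rcases le_total v' v with h | h
  · exact key v' v hv' hv h
  · rw [abs_sub_comm, abs_sub_comm v v']
    exact key v v' hv hv' h

lemma cop_contOn {C : ℝ → ℝ → ℝ} (hC : IsCopula C) :
    ContinuousOn (fun x : ℝ × ℝ => C x.1 x.2) unitSq := by
  refine (LipschitzOnWith.of_dist_le_mul (K := 2) ?_).continuousOn
  intro x hx y hy
  have hd1 : |x.1 - y.1| ≤ dist x y := by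
    rw [Prod.dist_eq]; exact le_max_of_le_left (by rw [Real.dist_eq])
  have hd2 : |x.2 - y.2| ≤ dist x y := by
    rw [Prod.dist_eq]; exact le_max_of_le_right (by rw [Real.dist_eq])
  have h1 : |C x.1 x.2 - C y.1 x.2| ≤ |x.1 - y.1| := cop_lip1 hC hx.1 hy.1 hx.2
  have h2 : |C y.1 x.2 - C y.1 y.2| ≤ |x.2 - y.2| := cop_lip2 hC hy.1 hx.2 hy.2
  have : |C x.1 x.2 - C y.1 y.2| ≤ |C x.1 x.2 - C y.1 x.2| + |C y.1 x.2 - C y.1 y.2| :=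
    abs_sub_le _ _ _
  rw [Real.dist_eq]
  push_cast
  linarith

lemma cop_F_contOn {C : ℝ → ℝ → ℝ} (hC : IsCopula C) {p : ℝ} (hp : 0 ≤ p) :
    ContinuousOn (fun x : ℝ × ℝ => |C x.1 x.2 - C x.2 x.1| ^ p) unitSq := by
  have h1 : ContinuousOn (fun x : ℝ × ℝ => C x.1 x.2) unitSq := cop_contOn hC
  have h2 : ContinuousOn (fun x : ℝ × ℝ => C x.2 x.1) unitSq := by
    have : Set.MapsTo (Prod.swap : ℝ × ℝ → ℝ × ℝ) unitSq unitSq := fun x hx => ⟨hx.2, hx.1⟩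
    exact h1.comp continuous_swap.continuousOn this
  exact ((h1.sub h2).abs).rpow_const (fun x _ => Or.inr hp)

lemma le_sup_sup {f : ℝ → ℝ → ℝ} (hb : ∀ u ∈ Set.Icc (0:ℝ) 1, ∀ v ∈ Set.Icc (0:ℝ) 1, |f u v| ≤ 2)
    {u v : ℝ} (hu : u ∈ Set.Icc (0:ℝ) 1) (hv : v ∈ Set.Icc (0:ℝ) 1) :
    |f u v| ≤ ⨆ u ∈ Set.Icc (0:ℝ) 1, ⨆ v ∈ Set.Icc (0:ℝ) 1, |f u v| := by
  have hbddin : ∀ u' ∈ Set.Icc (0:ℝ) 1,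
      BddAbove (Set.range fun v' => ⨆ (_ : v' ∈ Set.Icc (0:ℝ) 1), |f u' v'|) := by
    intro u' hu'
    refine ⟨2, ?_⟩
    rintro _ ⟨v', rfl⟩
    exact Real.iSup_le (fun h => hb u' hu' v' h) (by norm_num)
  have step1 : |f u v| ≤ ⨆ v' ∈ Set.Icc (0:ℝ) 1, |f u v'| := by
    have := le_ciSup (hbddin u hu) v
    rwa [ciSup_pos hv] at this
  have hbddout : BddAbove (Set.range fun u' =>
      ⨆ (_ : u' ∈ Set.Icc (0:ℝ) 1), ⨆ v' ∈ Set.Icc (0:ℝ) 1, |f u' v'|) := by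
    refine ⟨2, ?_⟩
    rintro _ ⟨u', rfl⟩
    refine Real.iSup_le (fun hu' => ?_) (by norm_num)
    exact Real.iSup_le (fun v' => Real.iSup_le (fun h => hb u' hu' v' h) (by norm_num)) (by norm_num)
  have step2 : (⨆ v' ∈ Set.Icc (0:ℝ) 1, |f u v'|) ≤
      ⨆ u' ∈ Set.Icc (0:ℝ) 1, ⨆ v' ∈ Set.Icc (0:ℝ) 1, |f u' v'| := by
    have := le_ciSup hbddout u
    rwa [ciSup_pos hu] at this
  exact step1.trans step2

theorem stmt19 (p : ℝ) (hp : 1 ≤ p) (Cn : ℕ → ℝ → ℝ → ℝ) (C : ℝ → ℝ → ℝ)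
    (hCn : ∀ n, IsCopula (Cn n)) (hC : IsCopula C)
    (hconv : Filter.Tendsto
      (fun n => ⨆ u ∈ Set.Icc (0:ℝ) 1, ⨆ v ∈ Set.Icc (0:ℝ) 1, |Cn n u v - C u v|)
      Filter.atTop (nhds 0))
    (hasym : ∃ u₀ ∈ Set.Icc (0:ℝ) 1, ∃ v₀ ∈ Set.Icc (0:ℝ) 1, C u₀ v₀ ≠ C v₀ u₀) :
    Filter.Tendsto (fun n => ∫ x in unitSq, |Cn n x.1 x.2 - Cn n x.2 x.1| ^ p)
      Filter.atTop (nhds (∫ x in unitSq, |C x.1 x.2 - C x.2 x.1| ^ p)) ∧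
    (0 < ∫ x in unitSq, |C x.1 x.2 - C x.2 x.1| ^ p) ∧
    ∀ c : ℕ → ℝ, Filter.Tendsto (fun n => c n / (n : ℝ)) Filter.atTop (nhds 0) →
      ∀ᶠ n in Filter.atTop,
        c n < (n : ℝ) * ∫ x in unitSq, |Cn n x.1 x.2 - Cn n x.2 x.1| ^ p := by
  have hp0 : 0 < p := lt_of_lt_of_le one_pos hp
  set F : ℕ → ℝ × ℝ → ℝ := fun n x => |Cn n x.1 x.2 - Cn n x.2 x.1| ^ p with hF
  set G : ℝ × ℝ → ℝ := fun x => |C x.1 x.2 - C x.2 x.1| ^ p with hG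
  have hsq_meas : MeasurableSet unitSq := measurableSet_Icc.prod measurableSet_Icc
  have hsq_cpt : IsCompact unitSq := isCompact_Icc.prod isCompact_Icc
  have hfin : volume unitSq < ⊤ := hsq_cpt.measure_lt_top
  have hGcont : ContinuousOn G unitSq := cop_F_contOn hC hp0.le
  have hGint : IntegrableOn G unitSq := hGcont.integrableOn_compact hsq_cpt
  have hFint : ∀ n, IntegrableOn (F n) unitSq :=
    fun n => (cop_F_contOn (hCn n) hp0.le).integrableOn_compact hsq_cpt
  -- pointwise bound for F n on the square
  have habs_le_one : ∀ (D : ℝ → ℝ → ℝ), IsCopula D → ∀ x ∈ unitSq,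
      |D x.1 x.2 - D x.2 x.1| ≤ 1 := by
    intro D hD x hx
    have h1 := cop_nonneg hD hx.1 hx.2
    have h2 := cop_le_one hD hx.1 hx.2
    have h3 := cop_nonneg hD hx.2 hx.1
    have h4 := cop_le_one hD hx.2 hx.1
    rw [abs_le]; constructor <;> linarith
  have hFle : ∀ n, ∀ x ∈ unitSq, F n x ≤ 1 := by
    intro n x hx
    exact Real.rpow_le_one (abs_nonneg _) (habs_le_one (Cn n) (hCn n) x hx) hp0.le
  have hF0 : ∀ n x, 0 ≤ F n x := fun n x => Real.rpow_nonneg (abs_nonneg _) p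
  -- pointwise convergence
  have hpt : ∀ x ∈ unitSq, Tendsto (fun n => F n x) atTop (nhds (G x)) := by
    intro x hx
    have hcnv : ∀ (a b : ℝ), a ∈ Set.Icc (0:ℝ) 1 → b ∈ Set.Icc (0:ℝ) 1 →
        Tendsto (fun n => Cn n a b) atTop (nhds (C a b)) := by
      intro a b ha hb
      rw [tendsto_iff_norm_sub_tendsto_zero]
      refine squeeze_zero (fun n => norm_nonneg _) (fun n => ?_) hconv
      have hb2 : ∀ u ∈ Set.Icc (0:ℝ) 1, ∀ v ∈ Set.Icc (0:ℝ) 1, |Cn n u v - C u v| ≤ 2 := by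
        intro u hu v hv
        have h1 := cop_nonneg (hCn n) hu hv
        have h2 := cop_le_one (hCn n) hu hv
        have h3 := cop_nonneg hC hu hv
        have h4 := cop_le_one hC hu hv
        rw [abs_le]; constructor <;> linarith
      simpa using le_sup_sup (f := fun u v => Cn n u v - C u v) hb2 ha hb
    have t1 := hcnv x.1 x.2 hx.1 hx.2
    have t2 := hcnv x.2 x.1 hx.2 hx.1
    have t3 : Tendsto (fun n => |Cn n x.1 x.2 - Cn n x.2 x.1|) atTop
        (nhds (|C x.1 x.2 - C x.2 x.1|)) := (t1.sub t2).abs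
    exact ((Real.continuousAt_rpow_const _ p (Or.inr hp0.le)).tendsto).comp t3
  -- Part 1: convergence of integrals
  have hTend : Tendsto (fun n => ∫ x in unitSq, F n x) atTop (nhds (∫ x in unitSq, G x)) := by
    refine tendsto_integral_of_dominated_convergence (fun _ => (1:ℝ))
      (fun n => (hFint n).aestronglyMeasurable) (integrableOn_const hfin.ne)
      (fun n => ?_) ?_
    · filter_upwards [ae_restrict_mem hsq_meas] with x hx
      rw [Real.norm_eq_abs, abs_of_nonneg (hF0 n x)]
      exact hFle n x hx
    · filter_upwards [ae_restrict_mem hsq_meas] with x hx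
      exact hpt x hx
  -- Part 2: positivity
  have hpos : 0 < ∫ x in unitSq, G x := by
    rw [setIntegral_pos_iff_support_of_nonneg_ae
      (Filter.Eventually.of_forall (fun x => Real.rpow_nonneg (abs_nonneg _) p)) hGint]
    obtain ⟨u₀, hu₀, v₀, hv₀, hne⟩ := hasym
    obtain ⟨hB0, hB0', hB1, hB1', h2⟩ := hC
    have hu₀0 : 0 < u₀ := by
      rcases eq_or_lt_of_le hu₀.1 with h | h
      · exfalso; apply hne; rw [← h, hB0' v₀ hv₀, hB0 v₀ hv₀]
      · exact h
    have hu₀1 : u₀ < 1 := by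
      rcases eq_or_lt_of_le hu₀.2 with h | h
      · exfalso; apply hne; rw [h, hB1' v₀ hv₀, hB1 v₀ hv₀]
      · exact h
    have hv₀0 : 0 < v₀ := by
      rcases eq_or_lt_of_le hv₀.1 with h | h
      · exfalso; apply hne; rw [← h, hB0 u₀ hu₀, hB0' u₀ hu₀]
      · exact h
    have hv₀1 : v₀ < 1 := by
      rcases eq_or_lt_of_le hv₀.2 with h | h
      · exfalso; apply hne; rw [h, hB1 u₀ hu₀, hB1' u₀ hu₀]
      · exact h
    set x₀ : ℝ × ℝ := (u₀, v₀) with hx₀def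
    have hx₀mem : x₀ ∈ unitSq := ⟨hu₀, hv₀⟩
    have hmem : unitSq ∈ nhds x₀ := by
      refine Filter.mem_of_superset
        (IsOpen.mem_nhds (isOpen_Ioo.prod isOpen_Ioo) ⟨⟨hu₀0, hu₀1⟩, ⟨hv₀0, hv₀1⟩⟩) ?_
      exact Set.prod_mono Set.Ioo_subset_Icc_self Set.Ioo_subset_Icc_self
    have hca : ContinuousAt G x₀ := (hGcont x₀ hx₀mem).continuousAt hmem
    have hGpos : 0 < G x₀ :=
      Real.rpow_pos_of_pos (abs_pos.mpr (sub_ne_zero.mpr hne)) p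
    have hev : ∀ᶠ y in nhds x₀, 0 < G y := hca.eventually (eventually_gt_nhds hGpos)
    have hev2 : ∀ᶠ y in nhds x₀, 0 < G y ∧ y ∈ unitSq := hev.and hmem
    obtain ⟨ε, hε, hball⟩ := Metric.eventually_nhds_iff_ball.mp hev2
    have hsub : Metric.ball x₀ ε ⊆ Function.support G ∩ unitSq := by
      intro y hy
      obtain ⟨h1, h2⟩ := hball y hy
      exact ⟨ne_of_gt h1, h2⟩
    calc (0 : ENNReal) < volume (Metric.ball x₀ ε) := Metric.measure_ball_pos volume x₀ hε
      _ ≤ volume (Function.support G ∩ unitSq) := measure_mono hsub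
  refine ⟨hTend, hpos, ?_⟩
  -- Part 3
  intro c hc
  set I : ℝ := ∫ x in unitSq, G x with hIdef
  have h2 : ∀ᶠ n in atTop, I / 2 < ∫ x in unitSq, F n x :=
    hTend.eventually (eventually_gt_nhds (half_lt_self hpos))
  have h3 : ∀ᶠ n in atTop, c n / (n : ℝ) < I / 2 :=
    hc.eventually (eventually_lt_nhds (half_pos hpos))
  filter_upwards [h2, h3, eventually_ge_atTop 1] with n ha hb hn
  have hn' : (0 : ℝ) < n := by exact_mod_cast hn
  have hcn : c n < I / 2 * n := by rw [div_lt_iff₀ hn'] at hb; linarith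
  have : I / 2 * n < (∫ x in unitSq, F n x) * n := mul_lt_mul_of_pos_right ha hn'
  calc c n < I / 2 * n := hcn
    _ < (∫ x in unitSq, F n x) * n := this
    _ = (n : ℝ) * ∫ x in unitSq, F n x := mul_comm _ _
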